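/- Let p be a strictly positive probability distribution on a finite vocabulary V, let α ∈ (0,1], and let (s_g) satisfy the anchored recursion s_{g+1} = α·p + (1-α)·s_g. Then the total variation distance between p and s_g satisfies (∑ i, |p i - s_g i|)² ≤ 2 · (1-α)^g · KL(p‖s_0) for every g ≥ 0; in particular the L¹ distance from the base teacher decays to zero at geometric rate √(1-α). -/

import Mathlib

/-- Auxiliary derivative computation for the refined log lower bound. -/
private lemma aux_hasDerivAt (x : ℝ) (hx : 0 < x) :
    HasDerivAt (fun t : ℝ => Real.log t - (5*t^2 - 4*t - 1)/(2*t^2 + 4*t))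
      ((x-1)^3/(x^2*(x+2)^2)) x := by
  have hden : 2*x^2 + 4*x ≠ 0 := by nlinarith
  have h1 : HasDerivAt Real.log x⁻¹ x := Real.hasDerivAt_log (ne_of_gt hx)
  have h2 : HasDerivAt (fun t : ℝ => 5*t^2 - 4*t - 1) (10*x - 4) x := by
    have h := (((hasDerivAt_pow 2 x).const_mul (5:ℝ)).sub
      ((hasDerivAt_id x).const_mul (4:ℝ))).sub_const (1:ℝ)
    exact h.congr_deriv (by ring)
  have h3 : HasDerivAt (fun t : ℝ => 2*t^2 + 4*t) (4*x + 4) x := by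
    have h := ((hasDerivAt_pow 2 x).const_mul (2:ℝ)).add
      ((hasDerivAt_id x).const_mul (4:ℝ))
    exact h.congr_deriv (by ring)
  have h4 := h2.div h3 hden
  have h := h1.sub h4
  refine h.congr_deriv ?_
  have hne : x ≠ 0 := ne_of_gt hx
  have hne2 : x + 2 ≠ 0 := by linarith
  field_simp
  ring

/-- Refined logarithm lower bound: `log t ≥ (5t²-4t-1)/(2t²+4t)` for `t > 0`. -/
private lemma aux_log_lb {t : ℝ} (ht : 0 < t) :
    (5*t^2 - 4*t - 1)/(2*t^2 + 4*t) ≤ Real.log t := by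
  set f : ℝ → ℝ := fun t => Real.log t - (5*t^2 - 4*t - 1)/(2*t^2 + 4*t) with hf
  have hf1 : f 1 = 0 := by simp [hf]; norm_num
  have hkey : 0 ≤ f t := by
    rcases le_total 1 t with h | h
    · have hmono : MonotoneOn f (Set.Ici (1:ℝ)) := by
        apply monotoneOn_of_deriv_nonneg (convex_Ici 1)
        · intro x hx
          exact ((aux_hasDerivAt x (by simp at hx; linarith)).continuousAt).continuousWithinAt
        · intro x hx
          simp only [interior_Ici, Set.mem_Ioi] at hx
          exact ((aux_hasDerivAt x (by linarith)).differentiableAt).differentiableWithinAt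
        · intro x hx
          simp only [interior_Ici, Set.mem_Ioi] at hx
          rw [(aux_hasDerivAt x (by linarith)).deriv]
          have h1 : (0:ℝ) ≤ (x-1)^3 := pow_nonneg (by linarith) 3
          exact div_nonneg h1 (by positivity)
      have := hmono (Set.mem_Ici.2 le_rfl) (Set.mem_Ici.2 h) h
      linarith [hf1 ▸ this]
    · have hanti : AntitoneOn f (Set.Ioc (0:ℝ) 1) := by
        apply antitoneOn_of_deriv_nonpos (convex_Ioc 0 1)
        · intro x hx
          exact ((aux_hasDerivAt x hx.1).continuousAt).continuousWithinAt
        · intro x hx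
          rw [interior_Ioc] at hx
          exact ((aux_hasDerivAt x hx.1).differentiableAt).differentiableWithinAt
        · intro x hx
          rw [interior_Ioc] at hx
          rw [(aux_hasDerivAt x hx.1).deriv]
          apply div_nonpos_of_nonpos_of_nonneg
          · nlinarith [hx.1, hx.2, sq_nonneg (x-1)]
          · positivity
      have := hanti (Set.mem_Ioc.2 ⟨ht, h⟩) (Set.mem_Ioc.2 ⟨one_pos, le_rfl⟩) h
      linarith [hf1 ▸ this]
  simpa [hf, sub_nonneg] using hkey

/-- Pointwise refined Pinsker bound: `a·log(a/b) ≥ (a-b) + 3(a-b)²/(2(a+2b))`. -/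
private lemma aux_pointwise {a b : ℝ} (ha : 0 < a) (hb : 0 < b) :
    (a - b) + 3*(a-b)^2/(2*(a+2*b)) ≤ a * Real.log (a/b) := by
  have ht : 0 < a/b := div_pos ha hb
  have h := aux_log_lb ht
  have h2 : a * ((5*(a/b)^2 - 4*(a/b) - 1)/(2*(a/b)^2 + 4*(a/b))) ≤ a * Real.log (a/b) :=
    mul_le_mul_of_nonneg_left h ha.le
  have heq : a * ((5*(a/b)^2 - 4*(a/b) - 1)/(2*(a/b)^2 + 4*(a/b)))
      = (a - b) + 3*(a-b)^2/(2*(a+2*b)) := by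
    field_simp
    ring
  linarith [heq ▸ h2]

/-- **Pinsker's inequality** for strictly positive finite distributions. -/
private lemma aux_pinsker {V : Type*} [Fintype V]
    (p q : V → ℝ) (hp : ∀ i, 0 < p i) (hq : ∀ i, 0 < q i)
    (hps : ∑ i, p i = 1) (hqs : ∑ i, q i = 1) :
    (∑ i, |p i - q i|) ^ 2 ≤ 2 * ∑ i, p i * Real.log (p i / q i) := by
  set m : V → ℝ := fun i => (p i + 2 * q i) / 3 with hm
  have hm_pos : ∀ i, 0 < m i := fun i => by have := hp i; have := hq i; positivity
  have hm_sum : ∑ i, m i = 1 := by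
    have h3 : ∑ i, (p i + 2 * q i) = 3 := by
      rw [Finset.sum_add_distrib, hps, ← Finset.mul_sum, hqs]; norm_num
    simp only [hm]
    rw [← Finset.sum_div, h3]; norm_num
  -- Cauchy-Schwarz (Sedrakyan): (∑ |p-q|)² ≤ ∑ (p-q)²/m
  have hcs : (∑ i, |p i - q i|) ^ 2 ≤ ∑ i, (p i - q i)^2 / m i := by
    have h := Finset.sq_sum_div_le_sum_sq_div Finset.univ (fun i => |p i - q i|)
      (fun i _ => hm_pos i)
    simp only [sq_abs] at h
    calc (∑ i, |p i - q i|) ^ 2 = (∑ i, |p i - q i|) ^ 2 / ∑ i, m i := by rw [hm_sum]; ring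
      _ ≤ ∑ i, (p i - q i)^2 / m i := h
  -- pointwise bound summed
  have hsum : ∑ i, (p i - q i)^2 / m i ≤ 2 * ∑ i, p i * Real.log (p i / q i) := by
    have hpt : ∀ i : V, (p i - q i) + (p i - q i)^2 / m i / 2 ≤ p i * Real.log (p i / q i) := by
      intro i
      have h := aux_pointwise (hp i) (hq i)
      have : (p i - q i)^2 / m i / 2 = 3*(p i - q i)^2/(2*(p i + 2*q i)) := by
        rw [hm]
        have := hp i; have := hq i
        field_simp
      linarith [this ▸ h]
    have h := Finset.sum_le_sum (fun i (_ : i ∈ Finset.univ) => hpt i)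
    rw [Finset.sum_add_distrib] at h
    have hzero : ∑ i, (p i - q i) = 0 := by
      rw [Finset.sum_sub_distrib, hps, hqs]; ring
    rw [hzero, zero_add] at h
    have : ∑ i, (p i - q i)^2 / m i / 2 = (∑ i, (p i - q i)^2 / m i) / 2 := by
      rw [Finset.sum_div]
    linarith [this ▸ h]
  linarith

/-- **Geometric decay of total variation distance via Pinsker.**
If `s (g+1) = α·p + (1-α)·s g` with `α ∈ (0,1]`, then
`(∑ i, |p i - s g i|)² ≤ 2 · (1-α)^g · KL(p‖s 0)` for every `g`. -/
theorem anchored_recursion_tv_geometric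
    {V : Type*} [Fintype V] [Nonempty V]
    (p : V → ℝ) (hp_pos : ∀ i, 0 < p i) (hp_sum : ∑ i, p i = 1)
    (α : ℝ) (hα0 : 0 < α) (hα1 : α ≤ 1)
    (s : ℕ → V → ℝ)
    (hs_pos : ∀ g i, 0 < s g i) (hs_sum : ∀ g, ∑ i, s g i = 1)
    (hrec : ∀ g i, s (g + 1) i = α * p i + (1 - α) * s g i) :
    ∀ g, (∑ i, |p i - s g i|) ^ 2 ≤
      2 * ((1 - α) ^ g * ∑ i, p i * Real.log (p i / s 0 i)) := by
  have hx0 : (0:ℝ) ≤ 1 - α := by linarith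
  have hx1 : (1:ℝ) - α ≤ 1 := by linarith
  have hdiff : ∀ g i, p i - s g i = (1 - α) ^ g * (p i - s 0 i) := by
    intro g
    induction g with
    | zero => intro i; simp
    | succ n ih =>
      intro i
      rw [hrec n i, pow_succ]
      have := ih i
      nlinarith [ih i]
  intro g
  set T := ∑ i, |p i - s 0 i| with hT
  have hTabs : ∑ i, |p i - s g i| = (1 - α)^g * T := by
    rw [hT, Finset.mul_sum]
    apply Finset.sum_congr rfl
    intro i _
    rw [hdiff g i, abs_mul, abs_of_nonneg (pow_nonneg hx0 g)]
  have hpinsker : T ^ 2 ≤ 2 * ∑ i, p i * Real.log (p i / s 0 i) :=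
    aux_pinsker p (s 0) hp_pos (hs_pos 0) hp_sum (hs_sum 0)
  rw [hTabs]
  have hxg : (0:ℝ) ≤ (1-α)^g := pow_nonneg hx0 g
  have hxg1 : (1-α)^g ≤ 1 := pow_le_one₀ hx0 hx1
  have h1 : ((1-α)^g * T)^2 = (1-α)^g * ((1-α)^g * T^2) := by ring
  rw [h1]
  have h2 : (1-α)^g * T^2 ≤ 2 * ∑ i, p i * Real.log (p i / s 0 i) := by
    calc (1-α)^g * T^2 ≤ 1 * T^2 :=
          mul_le_mul_of_nonneg_right hxg1 (sq_nonneg T)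
      _ = T^2 := one_mul _
      _ ≤ _ := hpinsker
  calc (1-α)^g * ((1-α)^g * T^2) ≤ (1-α)^g * (2 * ∑ i, p i * Real.log (p i / s 0 i)) :=
        mul_le_mul_of_nonneg_left h2 hxg
    _ = 2 * ((1-α)^g * ∑ i, p i * Real.log (p i / s 0 i)) := by ring
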